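/- For n ≥ 2 and d = 4n+1, in S_d let α = (1 2)(3 4)⋯(2n−1 2n) and β = (1 2n+1)·(2 2n+2 3 2n+3 ⋯ 2n 4n 4n+1) (a transposition times a disjoint (2n+1)-cycle on the remaining points). Then the commutator [α, β] equals (1 2)(3 4)⋯(4n−1 4n), a product of 2n disjoint transpositions. -/

import Mathlib

open Equiv
open Fin.NatCast

private lemma cv {d : ℕ} [NeZero d] {a : ℕ} (ha : a < d) : ((a : Fin d)).val = a := by
  rw [Fin.val_natCast, Nat.mod_eq_of_lt ha]

private lemma cinj {d : ℕ} [NeZero d] {a b : ℕ} (ha : a < d) (hb : b < d) :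
    ((a : Fin d) = (b : Fin d)) ↔ a = b := by
  rw [Fin.ext_iff, cv ha, cv hb]

private lemma prodSwap_apply (d : ℕ) [NeZero d] (m : ℕ) (hm : 2 * m ≤ d) :
    ∀ v, v < d →
    (((List.range m).map (fun k =>
        Equiv.swap ((2 * k : ℕ) : Fin d) ((2 * k + 1 : ℕ) : Fin d))).prod) ((v : ℕ) : Fin d)
      = (((if v < 2 * m then (if v % 2 = 0 then v + 1 else v - 1) else v) : ℕ) : Fin d) := by
  induction m with
  | zero => intro v hv; simp
  | succ m ih =>
    intro v hv
    have hm' : 2 * m ≤ d := by omega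
    rw [List.range_succ, List.map_append, List.prod_append, List.map_singleton,
      List.prod_singleton, Equiv.Perm.mul_apply]
    rcases eq_or_ne v (2 * m) with rfl | h1
    · rw [Equiv.swap_apply_left, ih hm' (2 * m + 1) (by omega)]
      congr 1
      split_ifs <;> first | omega | exact (‹False›).elim
    rcases eq_or_ne v (2 * m + 1) with rfl | h2
    · rw [Equiv.swap_apply_right, ih hm' (2 * m) (by omega)]
      congr 1
      split_ifs <;> first | omega | exact (‹False›).elim
    · rw [Equiv.swap_apply_of_ne_of_ne ((cinj hv (by omega)).not.2 h1)
        ((cinj hv (by omega)).not.2 h2), ih hm' v hv]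
      congr 1
      split_ifs <;> first | omega | exact (‹False›).elim

private lemma prodSwap_apply' (d : ℕ) [NeZero d] (m : ℕ) (hm : 2 * m ≤ d) (v w : ℕ) (hv : v < d)
    (hw : w = if v < 2 * m then (if v % 2 = 0 then v + 1 else v - 1) else v) :
    (((List.range m).map (fun k =>
        Equiv.swap ((2 * k : ℕ) : Fin d) ((2 * k + 1 : ℕ) : Fin d))).prod) ((v : ℕ) : Fin d)
      = ((w : ℕ) : Fin d) := by
  subst hw; exact prodSwap_apply d m hm v hv

private lemma pairs_length {α : Type*} (f g : ℕ → α) :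
    ∀ (m a : ℕ), (((List.range' a m).flatMap fun k => [f k, g k])).length = 2 * m := by
  intro m
  induction m with
  | zero => intro a; simp
  | succ m ih =>
    intro a
    rw [List.range'_succ, List.flatMap_cons, List.length_append, ih (a + 1)]
    simp; omega

private lemma pairs_getElem? {α : Type*} (f g : ℕ → α) :
    ∀ (m a j : ℕ), j < m →
    (((List.range' a m).flatMap fun k => [f k, g k]))[2 * j]? = some (f (a + j)) ∧
    (((List.range' a m).flatMap fun k => [f k, g k]))[2 * j + 1]? = some (g (a + j)) := by
  intro m
  induction m with
  | zero => intro a j h; omega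
  | succ m ih =>
    intro a j hj
    rw [List.range'_succ, List.flatMap_cons]
    rcases Nat.eq_zero_or_pos j with rfl | hj0
    · simp
    · obtain ⟨j, rfl⟩ : ∃ j', j = j' + 1 := ⟨j - 1, by omega⟩
      have h2 : ([f a, g a] : List α).length = 2 := rfl
      rw [List.getElem?_append_right (by simp), List.getElem?_append_right (by simp; omega)]
      have e1 : 2 * (j + 1) - ([f a, g a] : List α).length = 2 * j := by simp; omega
      have e2 : 2 * (j + 1) + 1 - ([f a, g a] : List α).length = 2 * j + 1 := by simp; omega
      rw [e1, e2]
      have := ih (a + 1) j (by omega)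
      constructor
      · rw [this.1]; congr 2; omega
      · rw [this.2]; congr 2; omega

/-- Example 3 of the paper, written 0-indexed on `Fin (4n+1)` (so the paper's point
`i` is our `i - 1`).  For `n ≥ 2` let
`α = (0 1)(2 3)⋯(2n−2 2n−1)` (the paper's `(1 2)(3 4)⋯(2n−1 2n)`),
`γ = (0 2n)` (the paper's `(1 2n+1)`), and `δ` the cycle through
`1, 2n+1, 2, 2n+2, …, 2n−1, 4n−1, 4n` (the paper's `(2 2n+2 3 2n+3 ⋯ 2n 4n 4n+1)`),
and `β = γδ`.  Then the commutator `[α,β] = αβα⁻¹β⁻¹` equals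
`(0 1)(2 3)⋯(4n−2 4n−1)` (the paper's `(1 2)(3 4)⋯(4n−1 4n)`),
a product of `2n` disjoint transpositions. -/
theorem commutator_example3 (n : ℕ) (hn : 2 ≤ n) :
    let α : Perm (Fin (4 * n + 1)) :=
      ((List.range n).map (fun k =>
        Equiv.swap ((2 * k : ℕ) : Fin (4 * n + 1)) ((2 * k + 1 : ℕ) : Fin (4 * n + 1)))).prod
    let γ : Perm (Fin (4 * n + 1)) :=
      Equiv.swap (0 : Fin (4 * n + 1)) ((2 * n : ℕ) : Fin (4 * n + 1))
    let δ : Perm (Fin (4 * n + 1)) :=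
      List.formPerm
        (((List.range' 1 (2 * n - 1)).flatMap (fun k =>
            [((k : ℕ) : Fin (4 * n + 1)), ((2 * n + k : ℕ) : Fin (4 * n + 1))])) ++
          [((4 * n : ℕ) : Fin (4 * n + 1))])
    let β : Perm (Fin (4 * n + 1)) := γ * δ
    α * β * α⁻¹ * β⁻¹ =
      ((List.range (2 * n)).map (fun k =>
        Equiv.swap ((2 * k : ℕ) : Fin (4 * n + 1)) ((2 * k + 1 : ℕ) : Fin (4 * n + 1)))).prod := by
  intro α γ δ β
  set Lnat : List ℕ := ((List.range' 1 (2 * n - 1)).flatMap fun k => [k, 2 * n + k]) ++ [4 * n]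
    with hLnatdef
  set L : List (Fin (4 * n + 1)) := Lnat.map (fun a => ((a : ℕ) : Fin (4 * n + 1))) with hLdef
  have hδ : δ = List.formPerm L := by
    show List.formPerm _ = _
    congr 1
    simp [hLdef, hLnatdef, List.map_flatMap]
  -- membership bounds
  have hmem : ∀ a ∈ Lnat, 1 ≤ a ∧ a ≤ 4 * n ∧ a ≠ 2 * n := by
    intro a ha
    rw [hLnatdef] at ha
    simp only [List.mem_append, List.mem_flatMap, List.mem_range', List.mem_cons,
      List.mem_singleton, List.not_mem_nil, or_false] at ha
    rcases ha with ⟨k, hk, rfl | rfl⟩ | rfl <;> omega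
  -- nodup
  have hnd : Lnat.Nodup := by
    rw [hLnatdef, List.nodup_append]
    refine ⟨?_, by simp, ?_⟩
    · rw [List.nodup_flatMap]
      constructor
      · intro k hk
        rw [List.mem_range'] at hk
        simp only [List.nodup_cons, List.mem_singleton, List.not_mem_nil, not_false_iff,
          List.nodup_nil, and_true]
        omega
      · refine (List.pairwise_lt_range' (s := 1) (n := 2 * n - 1)).imp_of_mem ?_
        intro a b ha hb hab
        rw [List.mem_range'] at ha hb
        simp only [Function.onFun, List.disjoint_left, List.mem_cons, List.mem_singleton,
          List.not_mem_nil, or_false]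
        rintro x (rfl | rfl) <;> rintro (h | h) <;> omega
    · simp only [List.disjoint_singleton, List.mem_flatMap, List.mem_range', List.mem_cons,
        List.mem_singleton, List.not_mem_nil, or_false, not_exists, not_and, not_or]
      rintro ⟨k, hk, rfl | rfl⟩ <;> omega
  have hndL : L.Nodup := by
    rw [hLdef]
    refine hnd.map_on ?_
    intro x hx y hy h
    exact (cinj (by have := hmem x hx; omega) (by have := hmem y hy; omega)).1 h
  have hlenflat : ((List.range' 1 (2 * n - 1)).flatMap fun k => [k, 2 * n + k]).length
      = 2 * (2 * n - 1) := pairs_length _ _ _ _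
  have hlen : L.length = 2 * (2 * n - 1) + 1 := by
    rw [hLdef, List.length_map, hLnatdef, List.length_append, hlenflat]
    rfl
  have hLe : ∀ j, j < 2 * n - 1 →
      L[2 * j]? = some (((1 + j : ℕ) : Fin (4 * n + 1))) := by
    intro j hj
    rw [hLdef, List.getElem?_map, hLnatdef,
      List.getElem?_append_left (by rw [hlenflat]; omega),
      (pairs_getElem? (fun k => k) (fun k => 2 * n + k) (2 * n - 1) 1 j hj).1]
    rfl
  have hLo : ∀ j, j < 2 * n - 1 →
      L[2 * j + 1]? = some (((2 * n + (1 + j) : ℕ) : Fin (4 * n + 1))) := by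
    intro j hj
    rw [hLdef, List.getElem?_map, hLnatdef,
      List.getElem?_append_left (by rw [hlenflat]; omega),
      (pairs_getElem? (fun k => k) (fun k => 2 * n + k) (2 * n - 1) 1 j hj).2]
    rfl
  have hLlast : L[2 * (2 * n - 1)]? = some (((4 * n : ℕ) : Fin (4 * n + 1))) := by
    rw [hLdef, List.getElem?_map, hLnatdef,
      List.getElem?_append_right (by rw [hlenflat]), hlenflat, Nat.sub_self]
    rfl
  have hδap : ∀ (i : ℕ), i < 2 * (2 * n - 1) + 1 → ∀ (a b : ℕ),
      L[i]? = some ((a : ℕ) : Fin (4 * n + 1)) →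
      L[(i + 1) % (2 * (2 * n - 1) + 1)]? = some ((b : ℕ) : Fin (4 * n + 1)) →
      δ ((a : ℕ) : Fin (4 * n + 1)) = ((b : ℕ) : Fin (4 * n + 1)) := by
    intro i hi a b h1 h2
    have hi' : i < L.length := by rw [hlen]; omega
    have e1 : L[i]'hi' = ((a : ℕ) : Fin (4 * n + 1)) := (List.getElem_eq_iff _).mpr h1
    rw [← e1, hδ, List.formPerm_apply_getElem _ hndL i hi']
    refine (List.getElem_eq_iff _).mpr ?_
    rw [hlen]
    exact h2
  have dd1 : ∀ k, 1 ≤ k → k ≤ 2 * n - 1 →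
      δ ((k : ℕ) : Fin (4 * n + 1)) = ((2 * n + k : ℕ) : Fin (4 * n + 1)) := by
    intro k h1 h2
    refine hδap (2 * (k - 1)) (by omega) k (2 * n + k) ?_ ?_
    · simpa [show 1 + (k - 1) = k from by omega] using hLe (k - 1) (by omega)
    · rw [Nat.mod_eq_of_lt (by omega)]
      simpa [show 1 + (k - 1) = k from by omega] using hLo (k - 1) (by omega)
  have dd2 : ∀ k, 1 ≤ k → k ≤ 2 * n - 2 →
      δ ((2 * n + k : ℕ) : Fin (4 * n + 1)) = ((k + 1 : ℕ) : Fin (4 * n + 1)) := by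
    intro k h1 h2
    refine hδap (2 * (k - 1) + 1) (by omega) (2 * n + k) (k + 1) ?_ ?_
    · simpa [show 1 + (k - 1) = k from by omega] using hLo (k - 1) (by omega)
    · rw [Nat.mod_eq_of_lt (by omega), show 2 * (k - 1) + 1 + 1 = 2 * k from by omega]
      simpa [Nat.add_comm] using hLe k (by omega)
  have dd3 : δ ((4 * n - 1 : ℕ) : Fin (4 * n + 1)) = ((4 * n : ℕ) : Fin (4 * n + 1)) := by
    refine hδap (2 * (2 * n - 2) + 1) (by omega) (4 * n - 1) (4 * n) ?_ ?_
    · simpa [show 2 * n + (1 + (2 * n - 2)) = 4 * n - 1 from by omega]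
        using hLo (2 * n - 2) (by omega)
    · rw [Nat.mod_eq_of_lt (by omega), show 2 * (2 * n - 2) + 1 + 1 = 2 * (2 * n - 1) from by omega]
      exact hLlast
  have dd4 : δ ((4 * n : ℕ) : Fin (4 * n + 1)) = ((1 : ℕ) : Fin (4 * n + 1)) := by
    refine hδap (2 * (2 * n - 1)) (by omega) (4 * n) 1 hLlast ?_
    · rw [Nat.mod_self]
      simpa using hLe 0 (by omega)
  have dd0 : ∀ a, a < 4 * n + 1 → (a = 0 ∨ a = 2 * n) →
      δ ((a : ℕ) : Fin (4 * n + 1)) = ((a : ℕ) : Fin (4 * n + 1)) := by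
    intro a ha hcase
    rw [hδ]
    refine List.formPerm_apply_of_notMem ?_
    rw [hLdef, List.mem_map]
    rintro ⟨y, hy, hcy⟩
    have hb := hmem y hy
    have := (cinj (by omega : y < 4 * n + 1) ha).1 hcy
    omega
  -- gamma
  have g0 : γ (((0 : ℕ) : Fin (4 * n + 1))) = ((2 * n : ℕ) : Fin (4 * n + 1)) := by
    show Equiv.swap (0 : Fin (4 * n + 1)) ((2 * n : ℕ) : Fin (4 * n + 1)) _ = _
    rw [Nat.cast_zero]
    exact Equiv.swap_apply_left _ _
  have g2n : γ (((2 * n : ℕ) : Fin (4 * n + 1))) = ((0 : ℕ) : Fin (4 * n + 1)) := by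
    show Equiv.swap (0 : Fin (4 * n + 1)) ((2 * n : ℕ) : Fin (4 * n + 1)) _ = _
    rw [Nat.cast_zero]
    exact Equiv.swap_apply_right _ _
  have ggen : ∀ w, w < 4 * n + 1 → w ≠ 0 → w ≠ 2 * n →
      γ (((w : ℕ) : Fin (4 * n + 1))) = ((w : ℕ) : Fin (4 * n + 1)) := by
    intro w hw hw0 hw2n
    show Equiv.swap (0 : Fin (4 * n + 1)) ((2 * n : ℕ) : Fin (4 * n + 1)) _ = _
    refine Equiv.swap_apply_of_ne_of_ne ?_ ?_
    · exact (Nat.cast_zero (R := Fin (4 * n + 1))) ▸ (cinj hw (by omega : 0 < 4 * n + 1)).not.2 hw0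
    · exact (cinj hw (by omega)).not.2 hw2n
  have hβap : ∀ x : Fin (4 * n + 1), β x = γ (δ x) := fun _ => rfl
  have b0 : β (((0 : ℕ) : Fin (4 * n + 1))) = ((2 * n : ℕ) : Fin (4 * n + 1)) := by
    rw [hβap, dd0 0 (by omega) (Or.inl rfl), g0]
  have b1 : ∀ k, 1 ≤ k → k ≤ 2 * n - 1 →
      β ((k : ℕ) : Fin (4 * n + 1)) = ((2 * n + k : ℕ) : Fin (4 * n + 1)) := by
    intro k h1 h2
    rw [hβap, dd1 k h1 h2, ggen (2 * n + k) (by omega) (by omega) (by omega)]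
  have b2 : β (((2 * n : ℕ) : Fin (4 * n + 1))) = ((0 : ℕ) : Fin (4 * n + 1)) := by
    rw [hβap, dd0 (2 * n) (by omega) (Or.inr rfl), g2n]
  have b3 : ∀ k, 1 ≤ k → k ≤ 2 * n - 2 →
      β ((2 * n + k : ℕ) : Fin (4 * n + 1)) = ((k + 1 : ℕ) : Fin (4 * n + 1)) := by
    intro k h1 h2
    rw [hβap, dd2 k h1 h2, ggen (k + 1) (by omega) (by omega) (by omega)]
  have b4 : β (((4 * n - 1 : ℕ) : Fin (4 * n + 1))) = ((4 * n : ℕ) : Fin (4 * n + 1)) := by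
    rw [hβap, dd3, ggen (4 * n) (by omega) (by omega) (by omega)]
  have b5 : β (((4 * n : ℕ) : Fin (4 * n + 1))) = ((1 : ℕ) : Fin (4 * n + 1)) := by
    rw [hβap, dd4, ggen 1 (by omega) (by omega) (by omega)]
  have hα : ∀ v w : ℕ, v < 4 * n + 1 →
      w = (if v < 2 * n then (if v % 2 = 0 then v + 1 else v - 1) else v) →
      α ((v : ℕ) : Fin (4 * n + 1)) = ((w : ℕ) : Fin (4 * n + 1)) := by
    intro v w hv hw
    exact prodSwap_apply' (4 * n + 1) n (by omega) v w hv hw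
  have hT : ∀ v w : ℕ, v < 4 * n + 1 →
      w = (if v < 2 * (2 * n) then (if v % 2 = 0 then v + 1 else v - 1) else v) →
      (((List.range (2 * n)).map (fun k =>
        Equiv.swap ((2 * k : ℕ) : Fin (4 * n + 1)) ((2 * k + 1 : ℕ) : Fin (4 * n + 1)))).prod)
          ((v : ℕ) : Fin (4 * n + 1)) = ((w : ℕ) : Fin (4 * n + 1)) := by
    intro v w hv hw
    exact prodSwap_apply' (4 * n + 1) (2 * n) (by omega) v w hv hw
  set T : Perm (Fin (4 * n + 1)) :=
    ((List.range (2 * n)).map (fun k =>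
      Equiv.swap ((2 * k : ℕ) : Fin (4 * n + 1)) ((2 * k + 1 : ℕ) : Fin (4 * n + 1)))).prod
    with hTdef
  suffices hkey : α * β = T * (β * α) by
    calc α * β * α⁻¹ * β⁻¹ = (α * β) * (β * α)⁻¹ := by group
      _ = (T * (β * α)) * (β * α)⁻¹ := by rw [hkey]
      _ = T := by group
  apply Equiv.ext
  intro x
  obtain ⟨v, hv, rfl⟩ : ∃ v, v < 4 * n + 1 ∧ x = ((v : ℕ) : Fin (4 * n + 1)) :=
    ⟨x.val, x.isLt, (Fin.cast_val_eq_self x).symm⟩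
  simp only [Equiv.Perm.mul_apply]
  rcases (show v = 0 ∨ v = 1 ∨ (2 ≤ v ∧ v ≤ 2 * n - 1) ∨ v = 2 * n ∨
      (2 * n + 1 ≤ v ∧ v ≤ 4 * n - 2) ∨ v = 4 * n - 1 ∨ v = 4 * n by omega) with
    rfl | rfl | ⟨h1, h2⟩ | rfl | ⟨h1, h2⟩ | rfl | rfl
  · rw [b0, hα (2 * n) (2 * n) (by omega) (by split_ifs <;> first | omega | exact (‹False›).elim),
      hα 0 1 (by omega) (by split_ifs <;> first | omega | exact (‹False›).elim), b1 1 (by omega) (by omega),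
      hT (2 * n + 1) (2 * n) (by omega) (by split_ifs <;> first | omega | exact (‹False›).elim)]
  · rw [b1 1 (by omega) (by omega)]
    rw [hα (2 * n + 1) (2 * n + 1) (by omega) (by split_ifs <;> first | omega | exact (‹False›).elim)]
    rw [hα 1 0 (by omega) (by split_ifs <;> first | omega | exact (‹False›).elim)]
    rw [b0]
    rw [hT (2 * n) (2 * n + 1) (by omega) (by split_ifs <;> first | omega | exact (‹False›).elim)]
  · rcases Nat.mod_two_eq_zero_or_one v with hp | hp
    · rw [b1 v (by omega) (by omega),
        hα (2 * n + v) (2 * n + v) (by omega) (by split_ifs <;> first | omega | exact (‹False›).elim),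
        hα v (v + 1) (by omega) (by split_ifs <;> first | omega | exact (‹False›).elim),
        b1 (v + 1) (by omega) (by omega),
        hT (2 * n + (v + 1)) (2 * n + v) (by omega) (by split_ifs <;> first | omega | exact (‹False›).elim)]
    · rw [b1 v (by omega) (by omega),
        hα (2 * n + v) (2 * n + v) (by omega) (by split_ifs <;> first | omega | exact (‹False›).elim),
        hα v (v - 1) (by omega) (by split_ifs <;> first | omega | exact (‹False›).elim),
        b1 (v - 1) (by omega) (by omega),
        hT (2 * n + (v - 1)) (2 * n + v) (by omega) (by split_ifs <;> first | omega | exact (‹False›).elim)]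
  · rw [b2, hα 0 1 (by omega) (by split_ifs <;> first | omega | exact (‹False›).elim),
      hα (2 * n) (2 * n) (by omega) (by split_ifs <;> first | omega | exact (‹False›).elim), b2,
      hT 0 1 (by omega) (by split_ifs <;> first | omega | exact (‹False›).elim)]
  · obtain ⟨k, rfl⟩ : ∃ k, v = 2 * n + k := ⟨v - 2 * n, by omega⟩
    have hk1 : 1 ≤ k := by omega
    have hk2 : k ≤ 2 * n - 2 := by omega
    rw [b3 k hk1 hk2,
      hα (2 * n + k) (2 * n + k) (by omega) (by split_ifs <;> first | omega | exact (‹False›).elim),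
      b3 k hk1 hk2,
      hα (k + 1) (if (k + 1) % 2 = 0 then k + 1 + 1 else k + 1 - 1) (by omega)
        (by split_ifs <;> first | omega | exact (‹False›).elim),
      hT (k + 1) (if (k + 1) % 2 = 0 then k + 1 + 1 else k + 1 - 1) (by omega)
        (by split_ifs <;> first | omega | exact (‹False›).elim)]
  · rw [b4, hα (4 * n) (4 * n) (by omega) (by split_ifs <;> first | omega | exact (‹False›).elim),
      hα (4 * n - 1) (4 * n - 1) (by omega) (by split_ifs <;> first | omega | exact (‹False›).elim), b4,
      hT (4 * n) (4 * n) (by omega) (by split_ifs <;> first | omega | exact (‹False›).elim)]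
  · rw [b5, hα 1 0 (by omega) (by split_ifs <;> first | omega | exact (‹False›).elim),
      hα (4 * n) (4 * n) (by omega) (by split_ifs <;> first | omega | exact (‹False›).elim), b5,
      hT 1 0 (by omega) (by split_ifs <;> first | omega | exact (‹False›).elim)]
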